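/- Let m, n be positive integers, C ∈ ℝ^{m×n}, ε > 0, and K_{ij} = exp(-C_{ij}/ε). Let a ∈ ℝ^m have strictly positive entries, let b^d, b^u ∈ ℝ^n satisfy 0 ≤ b^d ≤ b^u entrywise, and suppose C(a,b^u,b^d) is nonempty. Define the dual functional L(f,g,h) = ⟨f,a⟩ + ⟨g,b^d⟩ + ⟨h,b^u⟩ - ε·Σ_{ij} exp(f_i/ε)·K_{ij}·exp((g_j+h_j)/ε) for f ∈ ℝ^m, g ∈ ℝ^n, h ∈ ℝ^n. Then min over P ∈ C(a,b^u,b^d) of ⟨C,P⟩ - εH(P) equals the supremum of L(f,g,h) over all f ∈ ℝ^m, g ∈ ℝ^n with g ≥ 0 entrywise, and h ∈ ℝ^n with h ≤ 0 entrywise. -/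

import Mathlib

open Real Finset


lemma fenchel_exp (x s : ℝ) (hx : 0 ≤ x) : x * s ≤ x * (Real.log x - 1) + Real.exp s := by
  rcases eq_or_lt_of_le hx with h|h
  · rw [← h]; simpa using (Real.exp_pos s).le
  · have h1 : (s - Real.log x) + 1 ≤ Real.exp (s - Real.log x) := Real.add_one_le_exp _
    have h2 : Real.exp (s - Real.log x) = Real.exp s / x := by
      rw [Real.exp_sub, Real.exp_log h]
    rw [h2] at h1
    have := mul_le_mul_of_nonneg_left h1 h.le
    rw [mul_div_cancel₀ _ (ne_of_gt h)] at this
    nlinarith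

lemma convexOn_phi (c ε : ℝ) (hε : 0 ≤ ε) :
    ConvexOn ℝ (Set.Ici (0:ℝ)) (fun x => c * x + ε * (x * (Real.log x - 1))) := by
  have h1 : ConvexOn ℝ (Set.Ici (0:ℝ)) (fun x => ε * (x * Real.log x)) :=
    Real.convexOn_mul_log.smul hε
  have h2 : ConvexOn ℝ (Set.Ici (0:ℝ)) (fun x => (c - ε) * x) := by
    refine ⟨convex_Ici 0, ?_⟩
    intro x _ y _ p q _ _ _
    simp only [smul_eq_mul]; ring_nf; exact le_refl _
  have h3 := h1.add h2
  refine ConvexOn.congr h3 ?_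
  intro x _
  simp only [Pi.add_apply]
  ring

lemma hasDerivAt_phi (c ε x : ℝ) (hx : x ≠ 0) :
    HasDerivAt (fun y => c * y + ε * (y * (Real.log y - 1))) (c + ε * Real.log x) x := by
  have h1 : HasDerivAt (fun y : ℝ => y * Real.log y) (Real.log x + 1) x :=
    Real.hasDerivAt_mul_log hx
  have h2 : HasDerivAt (fun y : ℝ => y * (Real.log y - 1)) (Real.log x) x := by
    have h := h1.sub (hasDerivAt_id x)
    have : (Real.log x + 1) - 1 = Real.log x := by ring
    rw [this] at h
    refine h.congr_of_eventuallyEq ?_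
    filter_upwards with y
    simp [id]; ring
  have h4 := ((hasDerivAt_id x).const_mul c).add (h2.const_mul ε)
  have : c * 1 + ε * Real.log x = c + ε * Real.log x := by ring
  rw [this] at h4
  exact h4

lemma hasDerivAt_F {m n : ℕ} (C P d : Matrix (Fin m) (Fin n) ℝ) (ε : ℝ)
    (hpd : ∀ i j, d i j ≠ 0 → 0 < P i j) :
    HasDerivAt (fun δ : ℝ => ∑ i, ∑ j, (C i j * (P i j + δ * d i j) +
        ε * ((P i j + δ * d i j) * (Real.log (P i j + δ * d i j) - 1))))
      (∑ i, ∑ j, d i j * (C i j + ε * Real.log (P i j))) 0 := by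
  apply HasDerivAt.fun_sum
  intro i _
  apply HasDerivAt.fun_sum
  intro j _
  by_cases hd : d i j = 0
  · simp only [hd, mul_zero, add_zero, zero_mul]
    exact hasDerivAt_const 0 _
  · have hP : 0 < P i j := hpd i j hd
    have haff : HasDerivAt (fun δ : ℝ => P i j + δ * d i j) (d i j) 0 :=
      (hasDerivAt_mul_const (d i j)).const_add (P i j)
    have hφ : HasDerivAt (fun y => C i j * y + ε * (y * (Real.log y - 1)))
        (C i j + ε * Real.log (P i j)) (P i j) := hasDerivAt_phi _ _ _ (ne_of_gt hP)
    have hφ' : HasDerivAt (fun y => C i j * y + ε * (y * (Real.log y - 1)))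
        (C i j + ε * Real.log (P i j)) ((fun δ : ℝ => P i j + δ * d i j) 0) := by
      simpa using hφ
    have := hφ'.comp (0:ℝ) haff
    have e : (C i j + ε * Real.log (P i j)) * d i j = d i j * (C i j + ε * Real.log (P i j)) := by ring
    rw [e] at this
    exact this

lemma deriv_nonneg_of_right_min (ψ : ℝ → ℝ) (L δ₀ : ℝ) (hδ₀ : 0 < δ₀)
    (hd : HasDerivAt ψ L 0) (hmin : ∀ δ ∈ Set.Icc (0:ℝ) δ₀, ψ 0 ≤ ψ δ) : 0 ≤ L := by
  by_contra hL
  push_neg at hL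
  have hs := hasDerivAt_iff_tendsto_slope.mp hd
  have hs' : Filter.Tendsto (slope ψ 0) (nhdsWithin 0 (Set.Ioi 0)) (nhds L) :=
    hs.mono_left (nhdsWithin_mono 0 (fun x hx => ne_of_gt hx))
  have hev : ∀ᶠ δ in nhdsWithin 0 (Set.Ioi 0), slope ψ 0 δ < 0 :=
    hs' (Iio_mem_nhds hL)
  have hev2 : ∀ᶠ δ in nhdsWithin 0 (Set.Ioi 0), δ < δ₀ :=
    eventually_nhdsWithin_of_eventually_nhds (Filter.Tendsto.eventually_lt_const hδ₀ Filter.tendsto_id)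
  have hev3 : ∀ᶠ δ in nhdsWithin (0:ℝ) (Set.Ioi 0), δ ∈ Set.Ioi (0:ℝ) :=
    eventually_mem_nhdsWithin
  obtain ⟨δ, h1, h2, h3⟩ := (hev.and (hev2.and hev3)).exists
  have hδpos : (0:ℝ) < δ := h3
  rw [slope_def_field] at h1
  have hδ' : (0:ℝ) < δ - 0 := by simpa using hδpos
  have h4 : ψ δ - ψ 0 < 0 := by
    have := (div_lt_iff₀ hδ').mp h1
    simpa using this
  have h5 : ψ 0 ≤ ψ δ := hmin δ ⟨le_of_lt hδpos, le_of_lt h2⟩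
  linarith

lemma exists_minimizer {m n : ℕ} (C : Matrix (Fin m) (Fin n) ℝ) (ε : ℝ)
    (a : Fin m → ℝ) (ha : ∀ i, 0 < a i) (bd bu : Fin n → ℝ)
    (S : Set (Matrix (Fin m) (Fin n) ℝ))
    (hS : S = {P | (∀ i j, 0 ≤ P i j) ∧ (∀ i, ∑ j, P i j = a i) ∧
            (∀ j, bd j ≤ ∑ i, P i j) ∧ (∀ j, ∑ i, P i j ≤ bu j)})
    (hne : S.Nonempty) :
    ∃ P ∈ S, IsMinOn (fun R : Matrix (Fin m) (Fin n) ℝ =>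
      ∑ i, ∑ j, (C i j * R i j + ε * (R i j * (Real.log (R i j) - 1)))) S P := by
  have heval : ∀ (i : Fin m) (j : Fin n),
      Continuous (fun P : Matrix (Fin m) (Fin n) ℝ => P i j) :=
    fun i j => (continuous_apply j).comp (continuous_apply i)
  -- S is closed
  have hclosed : IsClosed S := by
    rw [hS]
    have h1 : IsClosed {P : Matrix (Fin m) (Fin n) ℝ | ∀ i j, 0 ≤ P i j} := by
      have : {P : Matrix (Fin m) (Fin n) ℝ | ∀ i j, 0 ≤ P i j}
          = ⋂ i, ⋂ j, {P | 0 ≤ P i j} := by ext P; simp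
      rw [this]
      exact isClosed_iInter fun i => isClosed_iInter fun j =>
        isClosed_le continuous_const (heval i j)
    have h2 : IsClosed {P : Matrix (Fin m) (Fin n) ℝ | ∀ i, ∑ j, P i j = a i} := by
      have : {P : Matrix (Fin m) (Fin n) ℝ | ∀ i, ∑ j, P i j = a i}
          = ⋂ i, {P | ∑ j, P i j = a i} := by ext P; simp
      rw [this]
      exact isClosed_iInter fun i =>
        isClosed_eq (continuous_finset_sum _ fun j _ => heval i j) continuous_const
    have h3 : IsClosed {P : Matrix (Fin m) (Fin n) ℝ | ∀ j, bd j ≤ ∑ i, P i j} := by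
      have : {P : Matrix (Fin m) (Fin n) ℝ | ∀ j, bd j ≤ ∑ i, P i j}
          = ⋂ j, {P | bd j ≤ ∑ i, P i j} := by ext P; simp
      rw [this]
      exact isClosed_iInter fun j =>
        isClosed_le continuous_const (continuous_finset_sum _ fun i _ => heval i j)
    have h4 : IsClosed {P : Matrix (Fin m) (Fin n) ℝ | ∀ j, ∑ i, P i j ≤ bu j} := by
      have : {P : Matrix (Fin m) (Fin n) ℝ | ∀ j, ∑ i, P i j ≤ bu j}
          = ⋂ j, {P | ∑ i, P i j ≤ bu j} := by ext P; simp
      rw [this]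
      exact isClosed_iInter fun j =>
        isClosed_le (continuous_finset_sum _ fun i _ => heval i j) continuous_const
    have : {P : Matrix (Fin m) (Fin n) ℝ | (∀ i j, 0 ≤ P i j) ∧ (∀ i, ∑ j, P i j = a i) ∧
            (∀ j, bd j ≤ ∑ i, P i j) ∧ (∀ j, ∑ i, P i j ≤ bu j)}
        = {P : Matrix (Fin m) (Fin n) ℝ | ∀ i j, 0 ≤ P i j}
          ∩ ({P | ∀ i, ∑ j, P i j = a i} ∩ ({P | ∀ j, bd j ≤ ∑ i, P i j}
            ∩ {P | ∀ j, ∑ i, P i j ≤ bu j})) := by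
      ext P; simp [Set.mem_inter_iff, and_assoc]
    rw [this]
    exact h1.inter (h2.inter (h3.inter h4))
  -- S is contained in a compact box
  have hbox : IsCompact (Set.pi Set.univ fun i : Fin m =>
      Set.pi Set.univ fun _ : Fin n => Set.Icc (0:ℝ) (a i)) :=
    isCompact_univ_pi fun i => isCompact_univ_pi fun _ => isCompact_Icc
  have hsub : S ⊆ (Set.pi Set.univ fun i : Fin m =>
      Set.pi Set.univ fun _ : Fin n => Set.Icc (0:ℝ) (a i)) := by
    intro P hP
    rw [hS] at hP
    obtain ⟨h0, hr, -, -⟩ := hP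
    intro i _
    intro j _
    refine ⟨h0 i j, ?_⟩
    calc P i j ≤ ∑ j', P i j' :=
          Finset.single_le_sum (fun j' _ => h0 i j') (Finset.mem_univ j)
      _ = a i := hr i
  have hcomp : IsCompact S := hbox.of_isClosed_subset hclosed hsub
  -- objective is continuous
  have hcont : Continuous (fun R : Matrix (Fin m) (Fin n) ℝ =>
      ∑ i, ∑ j, (C i j * R i j + ε * (R i j * (Real.log (R i j) - 1)))) := by
    apply continuous_finset_sum
    intro i _
    apply continuous_finset_sum
    intro j _
    have hml : Continuous (fun x : ℝ => x * (Real.log x - 1)) := by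
      have h := Real.continuous_mul_log.sub continuous_id
      have heq : (fun x : ℝ => x * Real.log x - id x) = (fun x : ℝ => x * (Real.log x - 1)) := by
        funext x; simp [id]; ring
      rw [← heq]; exact h
    exact ((continuous_const.mul (heval i j)).add
      (continuous_const.mul (hml.comp (heval i j))))
  exact hcomp.exists_isMinOn hne hcont.continuousOn

lemma sum_hot {m : ℕ} (i : Fin m) (v : Fin m → ℝ) :
    ∑ p, (if p = i then (1:ℝ) else 0) * v p = v i := by
  simp [ite_mul, Finset.sum_ite_eq']

lemma sum_dd {n : ℕ} (j k : Fin n) (v : Fin n → ℝ) :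
    ∑ q, ((if q = j then (1:ℝ) else 0) - (if q = k then 1 else 0)) * v q = v j - v k := by
  simp only [sub_mul, ite_mul, one_mul, zero_mul, Finset.sum_sub_distrib,
    Finset.sum_ite_eq', Finset.mem_univ, if_true]

lemma sum_dd' {n : ℕ} (j k : Fin n) :
    ∑ q, ((if q = j then (1:ℝ) else 0) - (if q = k then 1 else 0)) = 0 := by
  simp [Finset.sum_sub_distrib, Finset.sum_ite_eq']

lemma pert_mem {m n : ℕ} (a : Fin m → ℝ) (bd bu : Fin n → ℝ)
    (S : Set (Matrix (Fin m) (Fin n) ℝ))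
    (hS : S = {P | (∀ i j, 0 ≤ P i j) ∧ (∀ i, ∑ j, P i j = a i) ∧
            (∀ j, bd j ≤ ∑ i, P i j) ∧ (∀ j, ∑ i, P i j ≤ bu j)})
    (P : Matrix (Fin m) (Fin n) ℝ) (hP : P ∈ S)
    (r : Fin m → ℝ) (w : Fin n → ℝ) (hw : ∑ q, w q = 0) (δ : ℝ)
    (hpos : ∀ p q, 0 ≤ P p q + δ * (r p * w q))
    (hcd : ∀ q, bd q ≤ (∑ p, P p q) + δ * (∑ p, r p) * w q)
    (hcu : ∀ q, (∑ p, P p q) + δ * (∑ p, r p) * w q ≤ bu q) :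
    (fun p q => P p q + δ * (r p * w q)) ∈ S := by
  rw [hS] at hP ⊢
  obtain ⟨h0, hr, hd, hu⟩ := hP
  refine ⟨hpos, ?_, ?_, ?_⟩
  · intro p
    have : ∑ q, (P p q + δ * (r p * w q)) = (∑ q, P p q) + δ * r p * (∑ q, w q) := by
      rw [Finset.sum_add_distrib]
      congr 1
      rw [Finset.mul_sum]
      apply Finset.sum_congr rfl
      intro q _; ring
    rw [this, hw, mul_zero, add_zero, hr p]
  · intro q
    have : ∑ p, (P p q + δ * (r p * w q)) = (∑ p, P p q) + δ * (∑ p, r p) * w q := by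
      rw [Finset.sum_add_distrib]
      congr 1
      rw [mul_comm (δ * ∑ p, r p) (w q), Finset.mul_sum, Finset.mul_sum]
      apply Finset.sum_congr rfl
      intro p _; ring
    rw [this]; exact hcd q
  · intro q
    have : ∑ p, (P p q + δ * (r p * w q)) = (∑ p, P p q) + δ * (∑ p, r p) * w q := by
      rw [Finset.sum_add_distrib]
      congr 1
      rw [mul_comm (δ * ∑ p, r p) (w q), Finset.mul_sum, Finset.mul_sum]
      apply Finset.sum_congr rfl
      intro p _; ring
    rw [this]; exact hcu q

lemma dir_deriv_nonneg {m n : ℕ} (C : Matrix (Fin m) (Fin n) ℝ) (ε : ℝ)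
    (S : Set (Matrix (Fin m) (Fin n) ℝ)) (Pstar : Matrix (Fin m) (Fin n) ℝ)
    (hmin : IsMinOn (fun R : Matrix (Fin m) (Fin n) ℝ =>
      ∑ i, ∑ j, (C i j * R i j + ε * (R i j * (Real.log (R i j) - 1)))) S Pstar)
    (d : Matrix (Fin m) (Fin n) ℝ)
    (hsupp : ∀ i j, d i j ≠ 0 → 0 < Pstar i j) (δ₀ : ℝ) (hδ₀ : 0 < δ₀)
    (hfeas : ∀ δ ∈ Set.Icc (0:ℝ) δ₀, (fun p q => Pstar p q + δ * d p q) ∈ S) :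
    0 ≤ ∑ i, ∑ j, d i j * (C i j + ε * Real.log (Pstar i j)) := by
  apply deriv_nonneg_of_right_min _ _ δ₀ hδ₀ (hasDerivAt_F C Pstar d ε hsupp)
  intro δ hδ
  have h1 := hmin (hfeas δ hδ)
  simp only [Set.mem_setOf_eq] at h1
  have e0 : ∑ i, ∑ j, (C i j * (Pstar i j + 0 * d i j) +
      ε * ((Pstar i j + 0 * d i j) * (Real.log (Pstar i j + 0 * d i j) - 1)))
      = ∑ i, ∑ j, (C i j * Pstar i j + ε * (Pstar i j * (Real.log (Pstar i j) - 1))) := by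
    simp
  simp only [e0]
  exact h1

/-- If `P` minimizes the entropic objective over a convex set `S` of nonnegative
matrices and `P i0 j0 = 0`, then every `Q ∈ S` has `Q i0 j0 ≤ 0`. -/
lemma entry_zero_forced {m n : ℕ} (C : Matrix (Fin m) (Fin n) ℝ) (ε : ℝ) (hε : 0 < ε)
    (S : Set (Matrix (Fin m) (Fin n) ℝ))
    (hSconv : ∀ P ∈ S, ∀ Q ∈ S, ∀ t : ℝ, 0 ≤ t → t ≤ 1 →
      (fun i j => (1 - t) * P i j + t * Q i j) ∈ S)
    (hSpos : ∀ P ∈ S, ∀ i j, 0 ≤ P i j)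
    (P Q : Matrix (Fin m) (Fin n) ℝ) (hP : P ∈ S) (hQ : Q ∈ S)
    (hmin : IsMinOn (fun R : Matrix (Fin m) (Fin n) ℝ =>
      ∑ i, ∑ j, (C i j * R i j + ε * (R i j * (Real.log (R i j) - 1)))) S P)
    (i0 : Fin m) (j0 : Fin n) (h0 : P i0 j0 = 0) : Q i0 j0 ≤ 0 := by
  by_contra hv
  push_neg at hv
  set F : Matrix (Fin m) (Fin n) ℝ → ℝ :=
    fun R => ∑ i, ∑ j, (C i j * R i j + ε * (R i j * (Real.log (R i j) - 1))) with hF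
  set v : ℝ := Q i0 j0 with hvdef
  set R : ℝ := F Q - F P with hR
  have hR0 : 0 ≤ R := by
    have := hmin hQ
    simp only [hR]
    simpa using this
  set t : ℝ := min (1/2) (Real.exp (-(R + 1) / (ε * v))) with ht
  have ht0 : 0 < t := lt_min (by norm_num) (Real.exp_pos _)
  have ht1 : t ≤ 1/2 := min_le_left _ _
  have hεv : 0 < ε * v := mul_pos hε hv
  have htlog : Real.log t ≤ -(R + 1) / (ε * v) := by
    calc Real.log t ≤ Real.log (Real.exp (-(R + 1) / (ε * v))) :=
          Real.log_le_log ht0 (min_le_right _ _)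
      _ = -(R + 1) / (ε * v) := Real.log_exp _
  have hlogkey : ε * v * Real.log t ≤ -(R + 1) := by
    have := mul_le_mul_of_nonneg_left htlog hεv.le
    rwa [mul_div_cancel₀ _ (ne_of_gt hεv)] at this
  set Pt : Matrix (Fin m) (Fin n) ℝ := fun i j => (1 - t) * P i j + t * Q i j with hPt
  have hPtS : Pt ∈ S := hSconv P hP Q hQ t ht0.le (by linarith)
  have hentry : ∀ i j,
      C i j * Pt i j + ε * (Pt i j * (Real.log (Pt i j) - 1))
      ≤ ((1 - t) * (C i j * P i j + ε * (P i j * (Real.log (P i j) - 1)))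
          + t * (C i j * Q i j + ε * (Q i j * (Real.log (Q i j) - 1))))
        + (if i = i0 then (if j = j0 then ε * t * v * Real.log t else 0) else 0) := by
    intro i j
    by_cases hij : i = i0 ∧ j = j0
    · obtain ⟨hi, hj⟩ := hij
      subst hi; subst hj
      rw [if_pos rfl, if_pos rfl]
      have hPt0 : Pt i j = t * v := by simp [hPt, h0, hvdef]
      rw [hPt0, h0]
      rw [Real.log_mul (ne_of_gt ht0) (ne_of_gt hv)]
      apply le_of_eq
      ring
    · have hiteq : (if i = i0 then (if j = j0 then ε * t * v * Real.log t else 0) else 0) = 0 := by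
        by_cases hi : i = i0
        · have hj : ¬ j = j0 := fun hj => hij ⟨hi, hj⟩
          simp [hi, hj]
        · simp [hi]
      rw [hiteq, add_zero]
      have hconv := (convexOn_phi (C i j) ε hε.le).2
        (Set.mem_Ici.mpr (hSpos P hP i j)) (Set.mem_Ici.mpr (hSpos Q hQ i j))
        (by linarith : (0:ℝ) ≤ 1 - t) ht0.le (by ring)
      simp only [smul_eq_mul] at hconv
      exact hconv
  have hsum : F Pt ≤ ((1 - t) * F P + t * F Q) + ε * t * v * Real.log t := by
    have h1 : F Pt ≤ ∑ i, ∑ j,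
        (((1 - t) * (C i j * P i j + ε * (P i j * (Real.log (P i j) - 1)))
          + t * (C i j * Q i j + ε * (Q i j * (Real.log (Q i j) - 1))))
        + (if i = i0 then (if j = j0 then ε * t * v * Real.log t else 0) else 0)) := by
      apply Finset.sum_le_sum
      intro i _
      apply Finset.sum_le_sum
      intro j _
      exact hentry i j
    have h2 : ∑ i, ∑ j,
        (((1 - t) * (C i j * P i j + ε * (P i j * (Real.log (P i j) - 1)))
          + t * (C i j * Q i j + ε * (Q i j * (Real.log (Q i j) - 1))))
        + (if i = i0 then (if j = j0 then ε * t * v * Real.log t else 0) else 0))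
        = ((1 - t) * F P + t * F Q) + ε * t * v * Real.log t := by
      have h2a : ∀ x : Fin m, (∑ x1 : Fin n, if x = i0 then (if x1 = j0 then ε * t * v * Real.log t else 0) else 0)
          = (if x = i0 then ε * t * v * Real.log t else 0) := by
        intro x
        by_cases hx : x = i0
        · simp [hx, Finset.sum_ite_eq']
        · simp [hx]
      simp only [Finset.sum_add_distrib]
      rw [Finset.sum_congr rfl (fun x _ => h2a x),
        Finset.sum_ite_eq' Finset.univ i0 (fun _ => ε * t * v * Real.log t)]
      simp only [Finset.mem_univ, if_true, hF]
      simp only [← Finset.mul_sum]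
    exact h1.trans (le_of_eq h2)
  have hmint : F P ≤ F Pt := hmin hPtS
  have hfinal : F Pt ≤ F P - t := by
    have h3 : t * (ε * v * Real.log t) ≤ t * (-(R + 1)) :=
      mul_le_mul_of_nonneg_left hlogkey ht0.le
    have : ((1 - t) * F P + t * F Q) + ε * t * v * Real.log t
        = F P + t * R + t * (ε * v * Real.log t) := by
      simp only [hR]; ring
    rw [this] at hsum
    linarith
  linarith

lemma weak_duality {m n : ℕ} (C : Matrix (Fin m) (Fin n) ℝ) (ε : ℝ) (hε : 0 < ε)
    (a : Fin m → ℝ) (bd bu : Fin n → ℝ) (P : Matrix (Fin m) (Fin n) ℝ)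
    (hP0 : ∀ i j, 0 ≤ P i j) (hPr : ∀ i, ∑ j, P i j = a i)
    (hPd : ∀ j, bd j ≤ ∑ i, P i j) (hPu : ∀ j, ∑ i, P i j ≤ bu j)
    (f : Fin m → ℝ) (g h : Fin n → ℝ) (hg : ∀ j, 0 ≤ g j) (hh : ∀ j, h j ≤ 0) :
    (∑ i, f i * a i) + (∑ j, g j * bd j) + (∑ j, h j * bu j)
      - ε * ∑ i, ∑ j, Real.exp (f i / ε) * Real.exp (-(C i j) / ε) * Real.exp ((g j + h j) / ε)
    ≤ ∑ i, ∑ j, (C i j * P i j + ε * (P i j * (Real.log (P i j) - 1))) := by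
  have hεne : ε ≠ 0 := ne_of_gt hε
  -- rewrite the exp product
  have hexp : ∀ i j, Real.exp (f i / ε) * Real.exp (-(C i j) / ε) * Real.exp ((g j + h j) / ε)
      = Real.exp ((f i + g j + h j - C i j) / ε) := by
    intro i j
    rw [← Real.exp_add, ← Real.exp_add]
    congr 1
    field_simp
    ring
  -- pointwise Fenchel bound
  have hpw : ∀ i j, P i j * (f i + g j + h j) ≤ C i j * P i j
      + ε * (P i j * (Real.log (P i j) - 1))
      + ε * Real.exp ((f i + g j + h j - C i j) / ε) := by
    intro i j
    have := fenchel_exp (P i j) ((f i + g j + h j - C i j) / ε) (hP0 i j)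
    have h2 := mul_le_mul_of_nonneg_left this hε.le
    have h3 : ε * (P i j * ((f i + g j + h j - C i j) / ε))
        = P i j * (f i + g j + h j) - C i j * P i j := by
      field_simp
    rw [mul_add] at h2
    rw [h3] at h2
    linarith
  -- sum of the pointwise bounds
  have hsum : ∑ i, ∑ j, P i j * (f i + g j + h j)
      ≤ (∑ i, ∑ j, (C i j * P i j + ε * (P i j * (Real.log (P i j) - 1))))
        + ε * ∑ i, ∑ j, Real.exp ((f i + g j + h j - C i j) / ε) := by
    rw [Finset.mul_sum]
    rw [← Finset.sum_add_distrib]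
    apply Finset.sum_le_sum
    intro i _
    rw [Finset.mul_sum, ← Finset.sum_add_distrib]
    apply Finset.sum_le_sum
    intro j _
    have := hpw i j
    linarith
  -- split the linear form
  have hsplit : ∑ i, ∑ j, P i j * (f i + g j + h j)
      = (∑ i, f i * a i) + ((∑ j, g j * (∑ i, P i j)) + (∑ j, h j * (∑ i, P i j))) := by
    have e1 : ∀ i, ∑ j, P i j * (f i + g j + h j)
        = f i * a i + ((∑ j, P i j * g j) + (∑ j, P i j * h j)) := by
      intro i
      have : ∑ j, P i j * (f i + g j + h j)
          = (∑ j, P i j * f i) + ((∑ j, P i j * g j) + (∑ j, P i j * h j)) := by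
        rw [← Finset.sum_add_distrib, ← Finset.sum_add_distrib]
        apply Finset.sum_congr rfl
        intro j _; ring
      rw [this, ← Finset.sum_mul, hPr i, mul_comm]
    rw [Finset.sum_congr rfl (fun i _ => e1 i)]
    rw [Finset.sum_add_distrib, Finset.sum_add_distrib]
    congr 1
    congr 1
    · rw [Finset.sum_comm]
      apply Finset.sum_congr rfl
      intro j _
      rw [← Finset.sum_mul, mul_comm]
    · rw [Finset.sum_comm]
      apply Finset.sum_congr rfl
      intro j _
      rw [← Finset.sum_mul, mul_comm]
  have hgb : ∑ j, g j * bd j ≤ ∑ j, g j * (∑ i, P i j) :=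
    Finset.sum_le_sum (fun j _ => mul_le_mul_of_nonneg_left (hPd j) (hg j))
  have hhb : ∑ j, h j * bu j ≤ ∑ j, h j * (∑ i, P i j) :=
    Finset.sum_le_sum (fun j _ => mul_le_mul_of_nonpos_left (hPu j) (hh j))
  have hexps : ∑ i, ∑ j, Real.exp (f i / ε) * Real.exp (-(C i j) / ε) * Real.exp ((g j + h j) / ε)
      = ∑ i, ∑ j, Real.exp ((f i + g j + h j - C i j) / ε) := by
    apply Finset.sum_congr rfl; intro i _
    apply Finset.sum_congr rfl; intro j _
    exact hexp i j
  rw [hexps]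
  linarith [hsum, hsplit, hgb, hhb]

lemma exp_combine (ε fc gc hc Cc : ℝ) (hε : ε ≠ 0) :
    Real.exp (fc / ε) * Real.exp (-Cc / ε) * Real.exp ((gc + hc) / ε)
      = Real.exp ((fc + gc + hc - Cc) / ε) := by
  rw [← Real.exp_add, ← Real.exp_add]
  congr 1
  field_simp
  ring

set_option maxHeartbeats 1000000 in
/-- strong duality for entropic DB-OT — the minimum of the primal
objective over the double-bounded coupling set equals the supremum of the dual
functional L(f,g,h) over f ∈ ℝ^m, g ≥ 0, h ≤ 0. -/
theorem dbot_strong_duality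
    (m n : ℕ) (hm : 0 < m) (hn : 0 < n)
    (C : Matrix (Fin m) (Fin n) ℝ) (ε : ℝ) (hε : 0 < ε)
    (K : Matrix (Fin m) (Fin n) ℝ)
    (hK : ∀ i j, K i j = Real.exp (-(C i j) / ε))
    (a : Fin m → ℝ) (ha : ∀ i, 0 < a i)
    (bd bu : Fin n → ℝ) (hbd : ∀ j, 0 ≤ bd j) (hdu : ∀ j, bd j ≤ bu j)
    (S : Set (Matrix (Fin m) (Fin n) ℝ))
    (hS : S = {P | (∀ i j, 0 ≤ P i j) ∧ (∀ i, ∑ j, P i j = a i) ∧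
            (∀ j, bd j ≤ ∑ i, P i j) ∧ (∀ j, ∑ i, P i j ≤ bu j)})
    (hne : S.Nonempty) :
    ∃ Pstar ∈ S,
      IsMinOn (fun P : Matrix (Fin m) (Fin n) ℝ =>
          (∑ i, ∑ j, C i j * P i j) -
            ε * (-(∑ i, ∑ j, P i j * (Real.log (P i j) - 1)))) S Pstar ∧
      (∑ i, ∑ j, C i j * Pstar i j) -
          ε * (-(∑ i, ∑ j, Pstar i j * (Real.log (Pstar i j) - 1)))
        = sSup {y : ℝ | ∃ (f : Fin m → ℝ) (g h : Fin n → ℝ),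
            (∀ j, 0 ≤ g j) ∧ (∀ j, h j ≤ 0) ∧
            y = (∑ i, f i * a i) + (∑ j, g j * bd j) + (∑ j, h j * bu j)
                - ε * ∑ i, ∑ j,
                    Real.exp (f i / ε) * K i j * Real.exp ((g j + h j) / ε)} := by
  classical
  have hεne : ε ≠ 0 := ne_of_gt hε
  obtain ⟨Pstar, hPstarS, hminP⟩ := exists_minimizer C ε a ha bd bu S hS hne
  have hPdef := hPstarS
  rw [hS] at hPdef
  obtain ⟨hP0, hPr, hPd, hPu⟩ := hPdef
  have hFeq : ∀ P : Matrix (Fin m) (Fin n) ℝ,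
      ((∑ i, ∑ j, C i j * P i j) - ε * (-(∑ i, ∑ j, P i j * (Real.log (P i j) - 1))))
      = ∑ i, ∑ j, (C i j * P i j + ε * (P i j * (Real.log (P i j) - 1))) := by
    intro P
    have h1 : ∑ i, ∑ j, (C i j * P i j + ε * (P i j * (Real.log (P i j) - 1)))
        = (∑ i, ∑ j, C i j * P i j) + ε * (∑ i, ∑ j, P i j * (Real.log (P i j) - 1)) := by
      rw [Finset.mul_sum, ← Finset.sum_add_distrib]
      apply Finset.sum_congr rfl
      intro i _
      rw [Finset.mul_sum, ← Finset.sum_add_distrib]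
    rw [h1]; ring
  refine ⟨Pstar, hPstarS, ?_, ?_⟩
  · rw [isMinOn_iff]
    intro x hx
    rw [hFeq, hFeq]
    exact hminP hx
  · rw [hFeq Pstar]
    have hSpos : ∀ P ∈ S, ∀ i j, 0 ≤ P i j := by
      intro P hP; rw [hS] at hP; exact hP.1
    have hSconv : ∀ P ∈ S, ∀ Q ∈ S, ∀ t : ℝ, 0 ≤ t → t ≤ 1 →
        (fun i j => (1 - t) * P i j + t * Q i j) ∈ S := by
      intro P hP Q hQ t ht0 ht1
      rw [hS] at hP hQ ⊢
      obtain ⟨hP1, hP2, hP3, hP4⟩ := hP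
      obtain ⟨hQ1, hQ2, hQ3, hQ4⟩ := hQ
      have hsum : ∀ f1 f2 : Fin n → ℝ, ∑ j, ((1-t) * f1 j + t * f2 j)
          = (1-t) * ∑ j, f1 j + t * ∑ j, f2 j := by
        intro f1 f2
        rw [Finset.sum_add_distrib, Finset.mul_sum, Finset.mul_sum]
      have hsum' : ∀ f1 f2 : Fin m → ℝ, ∑ i, ((1-t) * f1 i + t * f2 i)
          = (1-t) * ∑ i, f1 i + t * ∑ i, f2 i := by
        intro f1 f2
        rw [Finset.sum_add_distrib, Finset.mul_sum, Finset.mul_sum]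
      refine ⟨fun i j => add_nonneg (mul_nonneg (by linarith) (hP1 i j))
          (mul_nonneg ht0 (hQ1 i j)), ?_, ?_, ?_⟩
      · intro i
        rw [hsum (fun j => P i j) (fun j => Q i j), hP2 i, hQ2 i]; ring
      · intro j
        rw [hsum' (fun i => P i j) (fun i => Q i j)]
        nlinarith [hP3 j, hQ3 j]
      · intro j
        rw [hsum' (fun i => P i j) (fun i => Q i j)]
        nlinarith [hP4 j, hQ4 j]
    have hforce : ∀ i j, Pstar i j = 0 → ∀ Q ∈ S, Q i j = 0 := by
      intro i j h0 Q hQ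
      exact le_antisymm
        (entry_zero_forced C ε hε S hSconv hSpos Pstar Q hPstarS hQ hminP i j h0)
        (hSpos Q hQ i j)
    have hentrycol : ∀ i j, 0 < Pstar i j → 0 < ∑ p, Pstar p j := fun i j h =>
      lt_of_lt_of_le h (Finset.single_le_sum (fun p _ => hP0 p j) (Finset.mem_univ i))
    have hzero : ∀ j, ¬(0 < ∑ p, Pstar p j) → ∀ i, Pstar i j = 0 := by
      intro j hj i
      by_contra hij
      exact hj (hentrycol i j (lt_of_le_of_ne (hP0 i j) (Ne.symm hij)))
    have hrowpos : ∀ i, ∃ k, 0 < Pstar i k := by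
      intro i
      by_contra hk; push_neg at hk
      have h1 : ∑ j, Pstar i j ≤ 0 := Finset.sum_nonpos (fun j _ => hk j)
      rw [hPr i] at h1
      exact absurd h1 (not_le.mpr (ha i))
    have hexcol : ∃ j, 0 < ∑ p, Pstar p j := by
      by_contra hj; push_neg at hj
      have h1 : ∑ j, ∑ p, Pstar p j ≤ 0 := Finset.sum_nonpos (fun j _ => hj j)
      have h2 : ∑ j, ∑ p, Pstar p j = ∑ p, a p := by
        rw [Finset.sum_comm]
        exact Finset.sum_congr rfl (fun p _ => hPr p)
      have h3 : 0 < ∑ p, a p :=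
        Finset.sum_pos (fun p _ => ha p) ⟨⟨0, hm⟩, Finset.mem_univ _⟩
      rw [h2] at h1; linarith
    -- feasibility of the two basic perturbations
    have hcycle : ∀ (i1 i2 : Fin m) (j1 j2 : Fin n), i1 ≠ i2 → j1 ≠ j2 →
        ∀ δ : ℝ, 0 ≤ δ → δ ≤ Pstar i1 j2 → δ ≤ Pstar i2 j1 →
        (fun p q => Pstar p q + δ * (((if p = i1 then (1:ℝ) else 0) - (if p = i2 then 1 else 0)) *
          ((if q = j1 then (1:ℝ) else 0) - (if q = j2 then 1 else 0)))) ∈ S := by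
      intro i1 i2 j1 j2 h12 hj12 δ hδ0 hδ1 hδ2
      have hr : ∑ p, ((if p = i1 then (1:ℝ) else 0) - (if p = i2 then 1 else 0)) = 0 :=
        sum_dd' i1 i2
      refine pert_mem a bd bu S hS Pstar hPstarS _ _ (sum_dd' j1 j2) δ ?_ ?_ ?_
      · intro p q
        rcases eq_or_ne p i1 with hp1|hp1 <;> rcases eq_or_ne p i2 with hp2|hp2 <;>
          rcases eq_or_ne q j1 with hq1|hq1 <;> rcases eq_or_ne q j2 with hq2|hq2 <;>
          simp only [hp1, hp2, hq1, hq2, h12, hj12, h12.symm, hj12.symm, eq_self_iff_true,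
            if_true, if_false, ite_true, ite_false, ne_eq, not_false_iff] <;>
          first
          | linarith [hP0 p q, mul_nonneg hδ0 (hP0 p q)]
          | linarith [hP0 i1 j1, hP0 i2 j2, hδ1, hδ2]
          | linarith [hP0 i1 q, hP0 i2 q, hP0 p j1, hP0 p j2, hP0 i1 j2, hP0 i2 j1]
      · intro q
        simp only [hr, mul_zero, zero_mul, add_zero]
        exact hPd q
      · intro q
        simp only [hr, mul_zero, zero_mul, add_zero]
        exact hPu q
    have hswap : ∀ (i1 : Fin m) (j1 j2 : Fin n), j1 ≠ j2 →
        ∀ δ : ℝ, 0 ≤ δ → δ ≤ Pstar i1 j2 → (∑ p, Pstar p j1) + δ ≤ bu j1 →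
        bd j2 ≤ (∑ p, Pstar p j2) - δ →
        (fun p q => Pstar p q + δ * ((if p = i1 then (1:ℝ) else 0) *
          ((if q = j1 then (1:ℝ) else 0) - (if q = j2 then 1 else 0)))) ∈ S := by
      intro i1 j1 j2 hj12 δ hδ0 hδ1 hbu1 hbd2
      have hr : ∑ p, (if p = i1 then (1:ℝ) else 0) = 1 := by
        simp [Finset.sum_ite_eq']
      refine pert_mem a bd bu S hS Pstar hPstarS _ _ (sum_dd' j1 j2) δ ?_ ?_ ?_
      · intro p q
        rcases eq_or_ne p i1 with hp1|hp1 <;>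
          rcases eq_or_ne q j1 with hq1|hq1 <;> rcases eq_or_ne q j2 with hq2|hq2 <;>
          simp only [hp1, hq1, hq2, hj12, hj12.symm, eq_self_iff_true, if_true, if_false,
            ite_true, ite_false, ne_eq, not_false_iff] <;>
          nlinarith [hP0 p q, hP0 i1 q, hP0 p j1, hP0 p j2, hP0 i1 j1, hP0 i1 j2]
      · intro q
        simp only [hr, mul_one]
        rcases eq_or_ne q j1 with hq1|hq1 <;> rcases eq_or_ne q j2 with hq2|hq2 <;>
          simp only [hq1, hq2, hj12, hj12.symm, eq_self_iff_true, if_true, if_false,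
            ite_true, ite_false, ne_eq, not_false_iff] <;>
          nlinarith [hPd q, hPd j1, hPd j2]
      · intro q
        simp only [hr, mul_one]
        rcases eq_or_ne q j1 with hq1|hq1 <;> rcases eq_or_ne q j2 with hq2|hq2 <;>
          simp only [hq1, hq2, hj12, hj12.symm, eq_self_iff_true, if_true, if_false,
            ite_true, ite_false, ne_eq, not_false_iff] <;>
          nlinarith [hPu q, hPu j1, hPu j2]
    have hcolpos : ∀ j, 0 < ∑ p, Pstar p j → ∀ i, 0 < Pstar i j := by
      intro j hcj i
      rcases lt_or_eq_of_le (hP0 i j) with h|h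
      · exact h
      have h0 : Pstar i j = 0 := h.symm
      -- find a positive entry in column j and in row i
      have hex1 : ∃ i1, 0 < Pstar i1 j := by
        by_contra hi1; push_neg at hi1
        have : ∑ p, Pstar p j ≤ 0 := Finset.sum_nonpos (fun p _ => hi1 p)
        linarith
      obtain ⟨i1, hi1⟩ := hex1
      obtain ⟨k, hk⟩ := hrowpos i
      have hii1 : i ≠ i1 := by
        intro he; rw [← he] at hi1; linarith
      have hjk : j ≠ k := by
        intro he; rw [← he] at hk; linarith
      set δ : ℝ := min (Pstar i k) (Pstar i1 j) with hδdef
      have hδ0 : 0 < δ := lt_min hk hi1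
      have hQ := hcycle i i1 j k hii1 hjk δ hδ0.le (min_le_left _ _) (min_le_right _ _)
      have hQval := hforce i j h0 _ hQ
      simp only [if_pos rfl] at hQval
      have hij : Pstar i j + δ * (((1:ℝ) - (if i = i1 then 1 else 0)) *
          ((1:ℝ) - (if j = k then 1 else 0))) = 0 := hQval
      rw [if_neg hii1, if_neg hjk, h0] at hij
      simp at hij
      linarith
    -- evaluation of the derivative sums
    have hcycle_eval : ∀ (i1 i2 : Fin m) (j1 j2 : Fin n),
        (∑ i, ∑ j, ((((if i = i1 then (1:ℝ) else 0) - (if i = i2 then 1 else 0)) *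
          ((if j = j1 then (1:ℝ) else 0) - (if j = j2 then 1 else 0))) *
          (C i j + ε * Real.log (Pstar i j))))
        = ((C i1 j1 + ε * Real.log (Pstar i1 j1)) - (C i1 j2 + ε * Real.log (Pstar i1 j2)))
          - ((C i2 j1 + ε * Real.log (Pstar i2 j1))
            - (C i2 j2 + ε * Real.log (Pstar i2 j2))) := by
      intro i1 i2 j1 j2
      have h1 : ∀ i : Fin m, (∑ j, ((((if i = i1 then (1:ℝ) else 0) - (if i = i2 then 1 else 0)) *
          ((if j = j1 then (1:ℝ) else 0) - (if j = j2 then 1 else 0))) *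
          (C i j + ε * Real.log (Pstar i j))))
          = ((if i = i1 then (1:ℝ) else 0) - (if i = i2 then 1 else 0)) *
            ((C i j1 + ε * Real.log (Pstar i j1)) - (C i j2 + ε * Real.log (Pstar i j2))) := by
        intro i
        rw [← sum_dd j1 j2 (fun j => C i j + ε * Real.log (Pstar i j)), Finset.mul_sum]
        apply Finset.sum_congr rfl
        intro j _; ring
      rw [Finset.sum_congr rfl (fun i _ => h1 i)]
      exact sum_dd i1 i2 (fun i => (C i j1 + ε * Real.log (Pstar i j1))
        - (C i j2 + ε * Real.log (Pstar i j2)))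
    have hswap_eval : ∀ (i1 : Fin m) (j1 j2 : Fin n),
        (∑ i, ∑ j, (((if i = i1 then (1:ℝ) else 0) *
          ((if j = j1 then (1:ℝ) else 0) - (if j = j2 then 1 else 0))) *
          (C i j + ε * Real.log (Pstar i j))))
        = (C i1 j1 + ε * Real.log (Pstar i1 j1)) - (C i1 j2 + ε * Real.log (Pstar i1 j2)) := by
      intro i1 j1 j2
      have h1 : ∀ i : Fin m, (∑ j, (((if i = i1 then (1:ℝ) else 0) *
          ((if j = j1 then (1:ℝ) else 0) - (if j = j2 then 1 else 0))) *
          (C i j + ε * Real.log (Pstar i j))))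
          = (if i = i1 then (1:ℝ) else 0) *
            ((C i j1 + ε * Real.log (Pstar i j1)) - (C i j2 + ε * Real.log (Pstar i j2))) := by
        intro i
        rw [← sum_dd j1 j2 (fun j => C i j + ε * Real.log (Pstar i j)), Finset.mul_sum]
        apply Finset.sum_congr rfl
        intro j _; ring
      rw [Finset.sum_congr rfl (fun i _ => h1 i)]
      exact sum_hot i1 (fun i => (C i j1 + ε * Real.log (Pstar i j1))
        - (C i j2 + ε * Real.log (Pstar i j2)))
    obtain ⟨j0, hj0⟩ := hexcol
    have i0 : Fin m := ⟨0, hm⟩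
    -- the four-cycle equality
    have hquad : ∀ i j, 0 < ∑ p, Pstar p j →
        C i j + ε * Real.log (Pstar i j)
        = (C i j0 + ε * Real.log (Pstar i j0)) + ((C i0 j + ε * Real.log (Pstar i0 j))
          - (C i0 j0 + ε * Real.log (Pstar i0 j0))) := by
      intro i j hposj
      rcases eq_or_ne j j0 with hj|hj
      · subst hj; ring
      rcases eq_or_ne i i0 with hi|hi
      · subst hi; ring
      have hp1 : 0 < Pstar i j0 := hcolpos j0 hj0 i
      have hp2 : 0 < Pstar i0 j := hcolpos j hposj i0
      have hp3 : 0 < Pstar i j := hcolpos j hposj i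
      have hp4 : 0 < Pstar i0 j0 := hcolpos j0 hj0 i0
      have hsupp1 : ∀ p q, (((if p = i then (1:ℝ) else 0) - (if p = i0 then 1 else 0)) *
          ((if q = j then (1:ℝ) else 0) - (if q = j0 then 1 else 0))) ≠ 0 → 0 < Pstar p q := by
        intro p q hd
        rcases eq_or_ne q j with hq|hq
        · subst hq; exact hcolpos _ hposj p
        rcases eq_or_ne q j0 with hq0|hq0
        · subst hq0; exact hcolpos _ hj0 p
        · exfalso; apply hd; rw [if_neg hq, if_neg hq0]; ring
      have hsupp2 : ∀ p q, (((if p = i0 then (1:ℝ) else 0) - (if p = i then 1 else 0)) *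
          ((if q = j then (1:ℝ) else 0) - (if q = j0 then 1 else 0))) ≠ 0 → 0 < Pstar p q := by
        intro p q hd
        rcases eq_or_ne q j with hq|hq
        · subst hq; exact hcolpos _ hposj p
        rcases eq_or_ne q j0 with hq0|hq0
        · subst hq0; exact hcolpos _ hj0 p
        · exfalso; apply hd; rw [if_neg hq, if_neg hq0]; ring
      have hd1 : 0 ≤ (∑ p, ∑ q, ((((if p = i then (1:ℝ) else 0) - (if p = i0 then 1 else 0)) *
          ((if q = j then (1:ℝ) else 0) - (if q = j0 then 1 else 0))) *
          (C p q + ε * Real.log (Pstar p q)))) := by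
        apply dir_deriv_nonneg C ε S Pstar hminP _ hsupp1
          (min (Pstar i j0) (Pstar i0 j)) (lt_min hp1 hp2)
        intro δ hδ
        exact hcycle i i0 j j0 hi hj δ hδ.1 (le_trans hδ.2 (min_le_left _ _))
          (le_trans hδ.2 (min_le_right _ _))
      have hd2 : 0 ≤ (∑ p, ∑ q, ((((if p = i0 then (1:ℝ) else 0) - (if p = i then 1 else 0)) *
          ((if q = j then (1:ℝ) else 0) - (if q = j0 then 1 else 0))) *
          (C p q + ε * Real.log (Pstar p q)))) := by
        apply dir_deriv_nonneg C ε S Pstar hminP _ hsupp2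
          (min (Pstar i0 j0) (Pstar i j)) (lt_min hp4 hp3)
        intro δ hδ
        exact hcycle i0 i j j0 hi.symm hj δ hδ.1 (le_trans hδ.2 (min_le_left _ _))
          (le_trans hδ.2 (min_le_right _ _))
      rw [hcycle_eval i i0 j j0] at hd1
      rw [hcycle_eval i0 i j j0] at hd2
      linarith
    -- the stationarity inequality
    have hstat : ∀ j k, 0 < ∑ p, Pstar p j → 0 < ∑ p, Pstar p k →
        (∑ p, Pstar p j) < bu j → bd k < ∑ p, Pstar p k →
        (C i0 k + ε * Real.log (Pstar i0 k)) ≤ (C i0 j + ε * Real.log (Pstar i0 j)) := by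
      intro j k hpj hpk hbuj hbdk
      rcases eq_or_ne j k with he|he
      · subst he; exact le_refl _
      have hik : 0 < Pstar i0 k := hcolpos k hpk i0
      have hsupp1 : ∀ p q, ((if p = i0 then (1:ℝ) else 0) *
          ((if q = j then (1:ℝ) else 0) - (if q = k then 1 else 0))) ≠ 0 → 0 < Pstar p q := by
        intro p q hd
        rcases eq_or_ne q j with hq|hq
        · subst hq; exact hcolpos _ hpj p
        rcases eq_or_ne q k with hq0|hq0
        · subst hq0; exact hcolpos _ hpk p
        · exfalso; apply hd; rw [if_neg hq, if_neg hq0]; ring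
      have hd1 : 0 ≤ (∑ p, ∑ q, (((if p = i0 then (1:ℝ) else 0) *
          ((if q = j then (1:ℝ) else 0) - (if q = k then 1 else 0))) *
          (C p q + ε * Real.log (Pstar p q)))) := by
        apply dir_deriv_nonneg C ε S Pstar hminP _ hsupp1
          (min (Pstar i0 k) (min (bu j - ∑ p, Pstar p j) ((∑ p, Pstar p k) - bd k)))
          (lt_min hik (lt_min (by linarith : (0:ℝ) < bu j - ∑ p, Pstar p j)
            (by linarith : (0:ℝ) < (∑ p, Pstar p k) - bd k)))
        intro δ hδ
        have hδ1 : δ ≤ Pstar i0 k := le_trans hδ.2 (min_le_left _ _)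
        have hδ2 : δ ≤ bu j - ∑ p, Pstar p j :=
          le_trans hδ.2 (le_trans (min_le_right _ _) (min_le_left _ _))
        have hδ3 : δ ≤ (∑ p, Pstar p k) - bd k :=
          le_trans hδ.2 (le_trans (min_le_right _ _) (min_le_right _ _))
        exact hswap i0 j k he δ hδ.1 hδ1 (by linarith) (by linarith)
      rw [hswap_eval i0 j k] at hd1
      linarith
    -- dichotomy for the recession direction
    have hdich : (∀ j, ¬(0 < ∑ p, Pstar p j) → bu j = 0) ∨
        (∀ k, (∑ p, Pstar p k) ≤ bd k) := by
      by_cases hc : ∀ k, (∑ p, Pstar p k) ≤ bd k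
      · exact Or.inr hc
      push_neg at hc
      obtain ⟨k, hk⟩ := hc
      left
      intro j hjn
      by_contra hbu
      have hbupos : 0 < bu j := lt_of_le_of_ne (le_trans (hbd j) (hdu j)) (Ne.symm hbu)
      have hcol0 : 0 ≤ ∑ p, Pstar p j := Finset.sum_nonneg (fun p _ => hP0 p j)
      have hcolj : ∑ p, Pstar p j = 0 := le_antisymm (not_lt.mp hjn) hcol0
      have hpk : 0 < ∑ p, Pstar p k := lt_of_le_of_lt (hbd k) hk
      have hjk : j ≠ k := by
        intro he; rw [he] at hcolj; rw [hcolj] at hk; linarith [hbd k]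
      have hik : 0 < Pstar i0 k := hcolpos k hpk i0
      have hδ0 : (0:ℝ) < min (Pstar i0 k) (min (bu j - ∑ p, Pstar p j)
          ((∑ p, Pstar p k) - bd k)) := by
        apply lt_min hik
        apply lt_min
        · linarith
        · linarith
      set δ : ℝ := min (Pstar i0 k) (min (bu j - ∑ p, Pstar p j)
          ((∑ p, Pstar p k) - bd k)) with hδdef
      have hδ1 : δ ≤ Pstar i0 k := min_le_left _ _
      have hδ2 : δ ≤ bu j - ∑ p, Pstar p j :=
        le_trans (min_le_right _ _) (min_le_left _ _)
      have hδ3 : δ ≤ (∑ p, Pstar p k) - bd k :=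
        le_trans (min_le_right _ _) (min_le_right _ _)
      have hQ := hswap i0 j k hjk δ hδ0.le hδ1 (by linarith) (by linarith)
      have h0ij : Pstar i0 j = 0 := hzero j hjn i0
      have hval := hforce i0 j h0ij _ hQ
      simp only [if_pos rfl] at hval
      rw [if_neg hjk, h0ij] at hval
      simp at hval
      linarith
    -- the normalisation constant c
    have hcex : ∃ c : ℝ, (∀ j, 0 < ∑ p, Pstar p j → (∑ p, Pstar p j) < bu j →
          c ≤ (C i0 j + ε * Real.log (Pstar i0 j))) ∧
        (∀ k, 0 < ∑ p, Pstar p k → bd k < ∑ p, Pstar p k →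
          (C i0 k + ε * Real.log (Pstar i0 k)) ≤ c) := by
      classical
      set A : Finset (Fin n) := Finset.univ.filter
        (fun j => 0 < ∑ p, Pstar p j ∧ (∑ p, Pstar p j) < bu j) with hAdef
      set B : Finset (Fin n) := Finset.univ.filter
        (fun k => 0 < ∑ p, Pstar p k ∧ bd k < ∑ p, Pstar p k) with hBdef
      by_cases hA : A.Nonempty
      · refine ⟨A.inf' hA (fun j => C i0 j + ε * Real.log (Pstar i0 j)), ?_, ?_⟩
        · intro j h1 h2
          exact Finset.inf'_le _ (by
            rw [hAdef, Finset.mem_filter]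
            exact ⟨Finset.mem_univ j, h1, h2⟩)
        · intro k h1 h2
          apply Finset.le_inf'
          intro j hj
          rw [hAdef, Finset.mem_filter] at hj
          exact hstat j k hj.2.1 h1 hj.2.2 h2
      · by_cases hB : B.Nonempty
        · refine ⟨B.sup' hB (fun k => C i0 k + ε * Real.log (Pstar i0 k)), ?_, ?_⟩
          · intro j h1 h2
            exact absurd (by
              rw [hAdef, Finset.mem_filter]
              exact ⟨Finset.mem_univ j, h1, h2⟩ : j ∈ A) (fun hj => hA ⟨j, hj⟩)
          · intro k h1 h2
            exact Finset.le_sup' (fun k => C i0 k + ε * Real.log (Pstar i0 k)) (by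
              rw [hBdef, Finset.mem_filter]
              exact ⟨Finset.mem_univ k, h1, h2⟩)
        · refine ⟨0, ?_, ?_⟩
          · intro j h1 h2
            exact absurd (by
              rw [hAdef, Finset.mem_filter]
              exact ⟨Finset.mem_univ j, h1, h2⟩ : j ∈ A) (fun hj => hA ⟨j, hj⟩)
          · intro k h1 h2
            exact absurd (by
              rw [hBdef, Finset.mem_filter]
              exact ⟨Finset.mem_univ k, h1, h2⟩ : k ∈ B) (fun hk => hB ⟨k, hk⟩)
    obtain ⟨c, hcA, hcB⟩ := hcex
    -- the dual variables
    obtain ⟨gfun, hgfun⟩ : ∃ gfun : Fin n → ℝ, ∀ j, gfun j =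
        if 0 < ∑ p, Pstar p j
        then max ((C i0 j + ε * Real.log (Pstar i0 j)) - c) 0 else 0 := ⟨_, fun j => rfl⟩
    obtain ⟨hfun, hhfun⟩ : ∃ hfun : Fin n → ℝ, ∀ j, hfun j =
        if 0 < ∑ p, Pstar p j
        then min ((C i0 j + ε * Real.log (Pstar i0 j)) - c) 0 else 0 := ⟨_, fun j => rfl⟩
    obtain ⟨fbf, hfbf⟩ : ∃ fbf : Fin m → ℝ, ∀ i, fbf i =
        (C i j0 + ε * Real.log (Pstar i j0)) + c
          - (C i0 j0 + ε * Real.log (Pstar i0 j0)) := ⟨_, fun i => rfl⟩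
    have hg0 : ∀ j, 0 ≤ gfun j := by
      intro j; rw [hgfun]
      split
      · exact le_max_right _ _
      · exact le_refl 0
    have hh0 : ∀ j, hfun j ≤ 0 := by
      intro j; rw [hhfun]
      split
      · exact min_le_right _ _
      · exact le_refl 0
    have hgh : ∀ j, 0 < ∑ p, Pstar p j →
        gfun j + hfun j = (C i0 j + ε * Real.log (Pstar i0 j)) - c := by
      intro j hj
      rw [hgfun, hhfun, if_pos hj, if_pos hj, max_add_min]
      ring
    have hkey : ∀ i j, 0 < ∑ p, Pstar p j →
        fbf i + (gfun j + hfun j) = C i j + ε * Real.log (Pstar i j) := by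
      intro i j hj
      rw [hgh j hj, hfbf, hquad i j hj]
      ring
    have hgs : ∀ j, gfun j * bd j = gfun j * (∑ p, Pstar p j) := by
      intro j
      rw [hgfun]
      split_ifs with hj
      · rcases le_or_gt ((C i0 j + ε * Real.log (Pstar i0 j)) - c) 0 with h1|h1
        · rw [max_eq_right h1, zero_mul, zero_mul]
        · rw [max_eq_left h1.le]
          have hnb : ¬ bd j < ∑ p, Pstar p j := by
            intro hlt
            have := hcB j hj hlt
            linarith
          have heq : bd j = ∑ p, Pstar p j := le_antisymm (hPd j) (not_lt.mp hnb)
          rw [heq]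
      · rw [zero_mul, zero_mul]
    have hhs : ∀ j, hfun j * bu j = hfun j * (∑ p, Pstar p j) := by
      intro j
      rw [hhfun]
      split_ifs with hj
      · rcases le_or_gt 0 ((C i0 j + ε * Real.log (Pstar i0 j)) - c) with h1|h1
        · rw [min_eq_right h1, zero_mul, zero_mul]
        · rw [min_eq_left h1.le]
          have hnb : ¬ (∑ p, Pstar p j) < bu j := by
            intro hlt
            have := hcA j hj hlt
            linarith
          have heq : bu j = ∑ p, Pstar p j := le_antisymm (not_lt.mp hnb) (hPu j)
          rw [heq]
      · rw [zero_mul, zero_mul]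
    -- the base linear identity
    have hLbase : (∑ i, fbf i * a i) + (∑ j, gfun j * bd j) + (∑ j, hfun j * bu j)
        = ∑ i, ∑ j, (C i j * Pstar i j + ε * (Pstar i j * Real.log (Pstar i j))) := by
      have h1 : ∑ i, fbf i * a i = ∑ i, ∑ j, fbf i * Pstar i j := by
        apply Finset.sum_congr rfl
        intro i _
        rw [← hPr i, Finset.mul_sum]
      have h2 : ∑ j, gfun j * bd j = ∑ i, ∑ j, gfun j * Pstar i j := by
        rw [Finset.sum_comm]
        apply Finset.sum_congr rfl
        intro j _
        rw [hgs j, Finset.mul_sum]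
      have h3 : ∑ j, hfun j * bu j = ∑ i, ∑ j, hfun j * Pstar i j := by
        rw [Finset.sum_comm]
        apply Finset.sum_congr rfl
        intro j _
        rw [hhs j, Finset.mul_sum]
      rw [h1, h2, h3]
      have h4 : ∀ i : Fin m, (∑ j, fbf i * Pstar i j) + (∑ j, gfun j * Pstar i j)
          + (∑ j, hfun j * Pstar i j)
          = ∑ j, (C i j * Pstar i j + ε * (Pstar i j * Real.log (Pstar i j))) := by
        intro i
        rw [← Finset.sum_add_distrib, ← Finset.sum_add_distrib]
        apply Finset.sum_congr rfl
        intro j _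
        rcases eq_or_lt_of_le (hP0 i j) with h|h
        · rw [← h]; simp
        · have hcol : 0 < ∑ p, Pstar p j := hentrycol i j h
          have hk := hkey i j hcol
          calc fbf i * Pstar i j + gfun j * Pstar i j + hfun j * Pstar i j
              = (fbf i + (gfun j + hfun j)) * Pstar i j := by ring
            _ = (C i j + ε * Real.log (Pstar i j)) * Pstar i j := by rw [hk]
            _ = C i j * Pstar i j + ε * (Pstar i j * Real.log (Pstar i j)) := by ring
      rw [← Finset.sum_add_distrib, ← Finset.sum_add_distrib]
      exact Finset.sum_congr rfl (fun i _ => h4 i)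
    -- the recession direction
    obtain ⟨φ, γ, η, hγ0, hη0, hlin0, hexp0, hexpm⟩ :
        ∃ (φ : Fin m → ℝ) (γ η : Fin n → ℝ), (∀ j, 0 ≤ γ j) ∧ (∀ j, η j ≤ 0) ∧
        ((∑ i, φ i * a i) + (∑ j, γ j * bd j) + (∑ j, η j * bu j) = 0) ∧
        (∀ i j, 0 < ∑ p, Pstar p j → φ i + (γ j + η j) = 0) ∧
        (∀ i j, ¬ 0 < ∑ p, Pstar p j → φ i + (γ j + η j) = -1) := by
      rcases hdich with hd1|hd2
      · refine ⟨fun _ => 0, fun _ => 0,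
          fun j => if 0 < ∑ p, Pstar p j then 0 else -1, ?_, ?_, ?_, ?_, ?_⟩
        · intro j; exact le_refl 0
        · intro j
          dsimp only
          split_ifs
          · exact le_refl 0
          · norm_num
        · have : ∀ j, (if 0 < ∑ p, Pstar p j then (0:ℝ) else -1) * bu j = 0 := by
            intro j
            split_ifs with hj
            · rw [zero_mul]
            · rw [hd1 j hj, mul_zero]
          simp [this]
        · intro i j hj; simp [if_pos hj]
        · intro i j hj; simp [if_neg hj]
      · refine ⟨fun _ => -1, fun j => if 0 < ∑ p, Pstar p j then 1 else 0,
          fun _ => 0, ?_, ?_, ?_, ?_, ?_⟩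
        · intro j
          dsimp only
          split_ifs
          · norm_num
          · exact le_refl 0
        · intro j; exact le_refl 0
        · have hcol : ∀ j, (if 0 < ∑ p, Pstar p j then (1:ℝ) else 0) * bd j
              = ∑ p, Pstar p j := by
            intro j
            split_ifs with hj
            · rw [one_mul]
              exact le_antisymm (hPd j) (hd2 j)
            · rw [zero_mul]
              have hcol0 : 0 ≤ ∑ p, Pstar p j := Finset.sum_nonneg (fun p _ => hP0 p j)
              exact (le_antisymm (not_lt.mp hj) hcol0).symm
          have hsa : ∑ j, ∑ p, Pstar p j = ∑ i, a i := by
            rw [Finset.sum_comm]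
            exact Finset.sum_congr rfl (fun p _ => hPr p)
          have hb : ∑ j, (if 0 < ∑ p, Pstar p j then (1:ℝ) else 0) * bd j = ∑ i, a i := by
            rw [Finset.sum_congr rfl (fun j _ => hcol j), hsa]
          have hneg : ∑ i, (-1 : ℝ) * a i = -(∑ i, a i) := by
            simp
          simp only [zero_mul, Finset.sum_const_zero, add_zero]
          rw [hb, hneg]
          ring
        · intro i j hj; simp [if_pos hj]
        · intro i j hj; simp [if_neg hj]
    -- upper bound: weak duality
    have hub : ∀ (f : Fin m → ℝ) (g h : Fin n → ℝ), (∀ j, 0 ≤ g j) → (∀ j, h j ≤ 0) →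
        (∑ i, f i * a i) + (∑ j, g j * bd j) + (∑ j, h j * bu j)
          - ε * ∑ i, ∑ j, Real.exp (f i / ε) * K i j * Real.exp ((g j + h j) / ε)
        ≤ ∑ i, ∑ j, (C i j * Pstar i j + ε * (Pstar i j * (Real.log (Pstar i j) - 1))) := by
      intro f g h hg hh
      have hwd := weak_duality C ε hε a bd bu Pstar hP0 hPr hPd hPu f g h hg hh
      have hKeq : ∑ i, ∑ j, Real.exp (f i / ε) * K i j * Real.exp ((g j + h j) / ε)
          = ∑ i, ∑ j, Real.exp (f i / ε) * Real.exp (-(C i j) / ε)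
            * Real.exp ((g j + h j) / ε) := by
        apply Finset.sum_congr rfl
        intro i _
        apply Finset.sum_congr rfl
        intro j _
        rw [hK]
      rw [hKeq]
      exact hwd
    -- near-optimal dual witnesses
    have hwit : ∀ δ : ℝ, 0 < δ → ∃ (f : Fin m → ℝ) (g h : Fin n → ℝ),
        (∀ j, 0 ≤ g j) ∧ (∀ j, h j ≤ 0) ∧
        (∑ i, ∑ j, (C i j * Pstar i j + ε * (Pstar i j * (Real.log (Pstar i j) - 1)))) - δ
          < (∑ i, f i * a i) + (∑ j, g j * bd j) + (∑ j, h j * bu j)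
            - ε * ∑ i, ∑ j, Real.exp (f i / ε) * K i j * Real.exp ((g j + h j) / ε) := by
      intro δ hδ
      set W : ℝ := ∑ i, ∑ j, (if 0 < ∑ p, Pstar p j then 0
        else Real.exp ((fbf i - C i j) / ε)) with hWdef
      have hW0 : 0 ≤ W := by
        apply Finset.sum_nonneg
        intro i _
        apply Finset.sum_nonneg
        intro j _
        split_ifs
        · exact le_refl 0
        · exact (Real.exp_pos _).le
      set u : ℝ := δ / (ε * (W + 1)) with hudef
      have hu : 0 < u := div_pos hδ (mul_pos hε (by linarith))
      set T : ℝ := ε * max 0 (1 - Real.log u) with hTdef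
      have hT0 : 0 ≤ T := mul_nonneg hε.le (le_max_left _ _)
      have hTexp : Real.exp (-T / ε) < u := by
        have hdiv : -T / ε = -(max 0 (1 - Real.log u)) := by
          rw [hTdef, neg_div, mul_div_cancel_left₀ _ hεne]
        rw [hdiv]
        rcases le_or_gt (1 - Real.log u) 0 with hcase|hcase
        · rw [max_eq_left hcase]
          have h1 : 1 ≤ Real.log u := by linarith
          have h2 : Real.log u ≤ u - 1 := Real.log_le_sub_one_of_pos hu
          simpa using (by linarith : (1:ℝ) < u)
        · rw [max_eq_right hcase.le]
          have h3 : Real.exp (-(1 - Real.log u)) < Real.exp (Real.log u) :=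
            Real.exp_lt_exp.mpr (by linarith)
          rwa [Real.exp_log hu] at h3
      refine ⟨fun i => fbf i + T * φ i, fun j => gfun j + T * γ j,
        fun j => hfun j + T * η j, ?_, ?_, ?_⟩
      · intro j
        exact add_nonneg (hg0 j) (mul_nonneg hT0 (hγ0 j))
      · intro j
        exact add_nonpos (hh0 j) (mul_nonpos_of_nonneg_of_nonpos hT0 (hη0 j))
      · show (∑ i, ∑ j, (C i j * Pstar i j + ε * (Pstar i j * (Real.log (Pstar i j) - 1)))) - δ
          < (∑ i, (fbf i + T * φ i) * a i) + (∑ j, (gfun j + T * γ j) * bd j)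
            + (∑ j, (hfun j + T * η j) * bu j)
            - ε * ∑ i, ∑ j, Real.exp ((fbf i + T * φ i) / ε) * K i j
              * Real.exp (((gfun j + T * γ j) + (hfun j + T * η j)) / ε)
        have hLin : (∑ i, (fbf i + T * φ i) * a i) + (∑ j, (gfun j + T * γ j) * bd j)
            + (∑ j, (hfun j + T * η j) * bu j)
            = (∑ i, fbf i * a i) + (∑ j, gfun j * bd j) + (∑ j, hfun j * bu j) := by
          have e1 : ∑ i, (fbf i + T * φ i) * a i
              = (∑ i, fbf i * a i) + T * ∑ i, φ i * a i := by
            rw [Finset.mul_sum, ← Finset.sum_add_distrib]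
            exact Finset.sum_congr rfl fun i _ => by ring
          have e2 : ∑ j, (gfun j + T * γ j) * bd j
              = (∑ j, gfun j * bd j) + T * ∑ j, γ j * bd j := by
            rw [Finset.mul_sum, ← Finset.sum_add_distrib]
            exact Finset.sum_congr rfl fun j _ => by ring
          have e3 : ∑ j, (hfun j + T * η j) * bu j
              = (∑ j, hfun j * bu j) + T * ∑ j, η j * bu j := by
            rw [Finset.mul_sum, ← Finset.sum_add_distrib]
            exact Finset.sum_congr rfl fun j _ => by ring
          rw [e1, e2, e3]
          have h0 : T * ((∑ i, φ i * a i) + ((∑ j, γ j * bd j) + (∑ j, η j * bu j)))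
              = 0 := by
            rw [show (∑ i, φ i * a i) + ((∑ j, γ j * bd j) + (∑ j, η j * bu j))
              = (∑ i, φ i * a i) + (∑ j, γ j * bd j) + (∑ j, η j * bu j) by ring,
              hlin0, mul_zero]
          linarith [h0]
        have hExpTerm : ∀ i j, Real.exp ((fbf i + T * φ i) / ε) * K i j *
              Real.exp (((gfun j + T * γ j) + (hfun j + T * η j)) / ε)
            = (if 0 < ∑ p, Pstar p j then Pstar i j
               else Real.exp ((fbf i - C i j) / ε) * Real.exp (-T / ε)) := by
          intro i j
          rw [hK i j, exp_combine ε _ _ _ _ hεne]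
          split_ifs with hj
          · have h1 := hkey i j hj
            have h2 := hexp0 i j hj
            have h3 : T * (φ i + (γ j + η j)) = 0 := by rw [h2, mul_zero]
            have harg : (fbf i + T * φ i + (gfun j + T * γ j) + (hfun j + T * η j)
                - C i j) / ε = Real.log (Pstar i j) := by
              rw [div_eq_iff hεne]
              nlinarith [h1, h3]
            rw [harg, Real.exp_log (hcolpos j hj i)]
          · have hgj : gfun j = 0 := by rw [hgfun, if_neg hj]
            have hhj : hfun j = 0 := by rw [hhfun, if_neg hj]
            have h2 := hexpm i j hj
            have h3 : T * (φ i + (γ j + η j)) = -T := by rw [h2]; ring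
            have harg : (fbf i + T * φ i + (gfun j + T * γ j) + (hfun j + T * η j)
                - C i j) / ε = (fbf i - C i j) / ε + (-T) / ε := by
              rw [← add_div]
              congr 1
              rw [hgj, hhj]
              nlinarith [h3]
            rw [harg, Real.exp_add]
        have hExpSum : ∑ i, ∑ j, Real.exp ((fbf i + T * φ i) / ε) * K i j *
              Real.exp (((gfun j + T * γ j) + (hfun j + T * η j)) / ε)
            = (∑ i, ∑ j, Pstar i j) + Real.exp (-T / ε) * W := by
          have e1 : ∀ i j, (if 0 < ∑ p, Pstar p j then Pstar i j
              else Real.exp ((fbf i - C i j) / ε) * Real.exp (-T / ε))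
              = Pstar i j + Real.exp (-T / ε) *
                (if 0 < ∑ p, Pstar p j then 0 else Real.exp ((fbf i - C i j) / ε)) := by
            intro i j
            split_ifs with hj
            · ring
            · rw [hzero j hj i]; ring
          have e2 : ∑ i, ∑ j, Real.exp ((fbf i + T * φ i) / ε) * K i j *
                Real.exp (((gfun j + T * γ j) + (hfun j + T * η j)) / ε)
              = ∑ i, ∑ j, (Pstar i j + Real.exp (-T / ε) *
                (if 0 < ∑ p, Pstar p j then 0
                 else Real.exp ((fbf i - C i j) / ε))) := by
            apply Finset.sum_congr rfl
            intro i _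
            apply Finset.sum_congr rfl
            intro j _
            rw [hExpTerm i j, e1 i j]
          rw [e2, hWdef]
          rw [Finset.mul_sum, ← Finset.sum_add_distrib]
          apply Finset.sum_congr rfl
          intro i _
          rw [Finset.mul_sum, ← Finset.sum_add_distrib]
        have hM2 : (∑ i, ∑ j, (C i j * Pstar i j
              + ε * (Pstar i j * (Real.log (Pstar i j) - 1))))
            = ((∑ i, fbf i * a i) + (∑ j, gfun j * bd j) + (∑ j, hfun j * bu j))
              - ε * (∑ i, ∑ j, Pstar i j) := by
          rw [hLbase]
          have h5 : ∀ i : Fin m, ∑ j, (C i j * Pstar i j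
                + ε * (Pstar i j * (Real.log (Pstar i j) - 1)))
              = (∑ j, (C i j * Pstar i j + ε * (Pstar i j * Real.log (Pstar i j))))
                - ε * ∑ j, Pstar i j := by
            intro i
            rw [Finset.mul_sum, ← Finset.sum_sub_distrib]
            exact Finset.sum_congr rfl fun j _ => by ring
          rw [Finset.sum_congr rfl (fun i _ => h5 i), Finset.sum_sub_distrib,
            ← Finset.mul_sum]
        have hbound : ε * (Real.exp (-T / ε) * W) < δ := by
          have hb1 : Real.exp (-T / ε) * W ≤ u * W :=
            mul_le_mul_of_nonneg_right hTexp.le hW0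
          have hb3 : ε * (u * (W + 1)) = δ := by
            rw [hudef]
            field_simp
          have hb2 : ε * (u * W) < ε * (u * (W + 1)) := by
            apply mul_lt_mul_of_pos_left _ hε
            nlinarith [hu]
          have hb4 : ε * (Real.exp (-T / ε) * W) ≤ ε * (u * W) :=
            mul_le_mul_of_nonneg_left hb1 hε.le
          linarith
        rw [hLin, hExpSum]
        linarith [hM2, hbound]
    -- conclusion via csSup
    apply le_antisymm
    · by_contra hlt
      push_neg at hlt
      obtain ⟨f, g, h, hg, hh, hgt⟩ := hwit _ (sub_pos.mpr hlt)
      rw [sub_sub_cancel] at hgt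
      have hbdd : BddAbove {y : ℝ | ∃ (f : Fin m → ℝ) (g h : Fin n → ℝ),
          (∀ j, 0 ≤ g j) ∧ (∀ j, h j ≤ 0) ∧
          y = (∑ i, f i * a i) + (∑ j, g j * bd j) + (∑ j, h j * bu j)
              - ε * ∑ i, ∑ j,
                  Real.exp (f i / ε) * K i j * Real.exp ((g j + h j) / ε)} := by
        refine ⟨∑ i, ∑ j, (C i j * Pstar i j
          + ε * (Pstar i j * (Real.log (Pstar i j) - 1))), ?_⟩
        rintro y ⟨f', g', h', hg', hh', rfl⟩
        exact hub f' g' h' hg' hh'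
      have hmem : ((∑ i, f i * a i) + (∑ j, g j * bd j) + (∑ j, h j * bu j)
          - ε * ∑ i, ∑ j, Real.exp (f i / ε) * K i j * Real.exp ((g j + h j) / ε))
          ∈ {y : ℝ | ∃ (f : Fin m → ℝ) (g h : Fin n → ℝ),
          (∀ j, 0 ≤ g j) ∧ (∀ j, h j ≤ 0) ∧
          y = (∑ i, f i * a i) + (∑ j, g j * bd j) + (∑ j, h j * bu j)
              - ε * ∑ i, ∑ j,
                  Real.exp (f i / ε) * K i j * Real.exp ((g j + h j) / ε)} :=
        ⟨f, g, h, hg, hh, rfl⟩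
      have hle := le_csSup hbdd hmem
      linarith
    · apply csSup_le
      · exact ⟨_, ⟨fun _ => 0, fun _ => 0, fun _ => 0,
          fun j => le_refl 0, fun j => le_refl 0, rfl⟩⟩
      · rintro y ⟨f, g, h, hg, hh, rfl⟩
        exact hub f g h hg hh
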